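/- For every positive integer m, the series ∑_{n=0}^∞ [(-1)^m − 1 + ∑_{k=0}^{m-1} (-1)^k · L_{2(m-k)(2m+1)^n}] / F_{(2m+1)^{n+1}} converges with sum 1. -/

import Mathlib

/-- The Lucas numbers: L 0 = 2, L 1 = 1, L (n+2) = L n + L (n+1). -/
def lucas : ℕ → ℕ
  | 0 => 2
  | 1 => 1
  | n + 2 => lucas n + lucas (n + 1)

open Real goldenRatio Filter Finset

/-- Binet's formula for the Lucas numbers. -/
lemma lucas_binet : ∀ n : ℕ, (lucas n : ℝ) = φ ^ n + ψ ^ n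
  | 0 => by norm_num [lucas]
  | 1 => by simp [lucas]
  | n + 2 => by
    have h1 := lucas_binet n
    have h2 := lucas_binet (n + 1)
    have e1 : φ ^ (n + 2) = φ ^ (n + 1) + φ ^ n := by
      calc φ ^ (n + 2) = φ ^ n * φ ^ 2 := by ring
      _ = φ ^ n * (φ + 1) := by rw [goldenRatio_sq]
      _ = φ ^ (n + 1) + φ ^ n := by ring
    have e2 : ψ ^ (n + 2) = ψ ^ (n + 1) + ψ ^ n := by
      calc ψ ^ (n + 2) = ψ ^ n * ψ ^ 2 := by ring
      _ = ψ ^ n * (ψ + 1) := by rw [goldenConj_sq]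
      _ = ψ ^ (n + 1) + ψ ^ n := by ring
    show ((lucas n + lucas (n + 1) : ℕ) : ℝ) = _
    push_cast
    rw [h1, h2, e1, e2]; ring

/-- Key polynomial identity. -/
lemma key_identity (x y : ℝ) (h : x * y = -1) :
    ∀ m : ℕ, x ^ (2 * m + 1) - y ^ (2 * m + 1) =
      (x - y) * ((-1) ^ m +
        ∑ k ∈ Finset.range m, (-1 : ℝ) ^ k * (x ^ (2 * (m - k)) + y ^ (2 * (m - k))))
  | 0 => by simp
  | m + 1 => by
    have ih := key_identity x y h m
    rw [Finset.sum_range_succ']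
    simp only [Nat.succ_sub_succ_eq_sub, Nat.sub_zero, pow_succ]
    have hsum : ∑ k ∈ Finset.range m,
        (-1 : ℝ) ^ k * -1 * (x ^ (2 * (m - k)) + y ^ (2 * (m - k)))
        = -∑ k ∈ Finset.range m, (-1 : ℝ) ^ k * (x ^ (2 * (m - k)) + y ^ (2 * (m - k))) := by
      rw [← Finset.sum_neg_distrib]
      exact Finset.sum_congr rfl fun k _ => by ring
    rw [hsum]
    linear_combination (-1 : ℝ) * ih + (x ^ (2 * m + 1) - y ^ (2 * m + 1)) * h

/-- The Fibonacci/Lucas identity for odd multiples and odd index. -/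
lemma fib_lucas_identity (m N : ℕ) (hN : Odd N) :
    (Nat.fib ((2 * m + 1) * N) : ℝ) =
      (Nat.fib N : ℝ) * ((-1) ^ m +
        ∑ k ∈ Finset.range m, (-1 : ℝ) ^ k * (lucas (2 * (m - k) * N) : ℝ)) := by
  have hxy : φ ^ N * ψ ^ N = -1 := by
    rw [← mul_pow, goldenRatio_mul_goldenConj, hN.neg_one_pow]
  have hkey := key_identity (φ ^ N) (ψ ^ N) hxy m
  rw [Real.coe_fib_eq, Real.coe_fib_eq]
  have hl : ∀ k ∈ Finset.range m, (-1 : ℝ) ^ k * (lucas (2 * (m - k) * N) : ℝ)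
      = (-1 : ℝ) ^ k * ((φ ^ N) ^ (2 * (m - k)) + (ψ ^ N) ^ (2 * (m - k))) := by
    intro k _
    rw [lucas_binet, Nat.mul_comm (2 * (m - k)) N, pow_mul φ N, pow_mul ψ N]
  rw [Finset.sum_congr rfl hl]
  rw [mul_comm (2 * m + 1) N, pow_mul, pow_mul]
  linear_combination hkey / √5

/-- n ≤ fib (n+1). -/
lemma le_fib_succ : ∀ n : ℕ, n ≤ Nat.fib (n + 1)
  | 0 => by simp
  | 1 => by simp
  | n + 2 => by
    have h1 : n + 1 ≤ Nat.fib (n + 2) := le_fib_succ (n + 1)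
    have h2 : 0 < Nat.fib (n + 1) := Nat.fib_pos.mpr n.succ_pos
    have h3 : Nat.fib (n + 3) = Nat.fib (n + 1) + Nat.fib (n + 2) := Nat.fib_add_two
    show n + 2 ≤ Nat.fib (n + 3)
    omega

theorem stmt13 (m : ℕ) (hm : 0 < m) :
    HasSum
      (fun n : ℕ =>
        ((-1 : ℝ) ^ m - 1 +
            ∑ k ∈ Finset.range m, (-1 : ℝ) ^ k * (lucas (2 * (m - k) * (2 * m + 1) ^ n) : ℝ)) /
          (Nat.fib ((2 * m + 1) ^ (n + 1)) : ℝ))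
      1 := by
  set g : ℕ → ℝ := fun n => ((Nat.fib ((2 * m + 1) ^ n) : ℝ))⁻¹ with hg
  have hfibpos : ∀ n : ℕ, 0 < (Nat.fib ((2 * m + 1) ^ n) : ℝ) := by
    intro n
    have : 0 < Nat.fib ((2 * m + 1) ^ n) :=
      Nat.fib_pos.mpr (pow_pos (by omega) n)
    exact_mod_cast this
  -- each term equals g n - g (n+1)
  have hterm : ∀ n : ℕ,
      ((-1 : ℝ) ^ m - 1 +
            ∑ k ∈ Finset.range m, (-1 : ℝ) ^ k * (lucas (2 * (m - k) * (2 * m + 1) ^ n) : ℝ)) /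
          (Nat.fib ((2 * m + 1) ^ (n + 1)) : ℝ) = g n - g (n + 1) := by
    intro n
    have hodd1 : Odd (2 * m + 1) := ⟨m, by ring⟩
    have hodd : Odd ((2 * m + 1) ^ n) := hodd1.pow
    have hid := fib_lucas_identity m ((2 * m + 1) ^ n) hodd
    have hpow : (2 * m + 1) * (2 * m + 1) ^ n = (2 * m + 1) ^ (n + 1) := by ring
    rw [hpow] at hid
    have h1 := hfibpos n
    have h2 := hfibpos (n + 1)
    rw [hg]
    field_simp
    linear_combination (-1 : ℝ) * hid
  -- monotonicity: g is antitone, terms nonneg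
  have hmono : ∀ n : ℕ, g (n + 1) ≤ g n := by
    intro n
    apply inv_anti₀ (hfibpos n)
    have : (2 * m + 1) ^ n ≤ (2 * m + 1) ^ (n + 1) :=
      Nat.pow_le_pow_right (by omega) (by omega)
    exact_mod_cast Nat.fib_mono this
  have hnonneg : ∀ n : ℕ, 0 ≤ ((-1 : ℝ) ^ m - 1 +
            ∑ k ∈ Finset.range m, (-1 : ℝ) ^ k * (lucas (2 * (m - k) * (2 * m + 1) ^ n) : ℝ)) /
          (Nat.fib ((2 * m + 1) ^ (n + 1)) : ℝ) := by
    intro n; rw [hterm n]; linarith [hmono n]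
  rw [hasSum_iff_tendsto_nat_of_nonneg hnonneg]
  have hps : ∀ n : ℕ, ∑ i ∈ Finset.range n,
      ((-1 : ℝ) ^ m - 1 +
            ∑ k ∈ Finset.range m, (-1 : ℝ) ^ k * (lucas (2 * (m - k) * (2 * m + 1) ^ i) : ℝ)) /
          (Nat.fib ((2 * m + 1) ^ (i + 1)) : ℝ) = g 0 - g n := by
    intro n
    rw [Finset.sum_congr rfl fun i _ => hterm i]
    exact Finset.sum_range_sub' g n
  simp only [hps]
  have hg0 : g 0 = 1 := by simp [hg]
  rw [hg0]
  have hgto : Tendsto g atTop (nhds 0) := by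
    apply Filter.Tendsto.inv_tendsto_atTop
    apply tendsto_atTop_mono (f := fun n : ℕ => (n : ℝ))
    · intro n
      have h1 : n < (2 * m + 1) ^ n := Nat.lt_pow_self (n := n) (a := 2 * m + 1) (by omega)
      have h2 : n ≤ Nat.fib ((2 * m + 1) ^ n) :=
        le_trans (le_fib_succ n) (Nat.fib_mono h1)
      exact_mod_cast h2
    · exact tendsto_natCast_atTop_atTop
  have := (tendsto_const_nhds (x := (1 : ℝ)) (f := atTop)).sub hgto
  simpa using this
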